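/- Let κ ≥ 1 and γ ∈ (0, 1). Let S ∈ ℝ^{n×n} be symmetric with I_n ≼ S ≼ κI_n, and let A ∈ ℝ^{n×n} satisfy AᵀSA ≼ (1−γ)²S in the Loewner order. Then for every X ∈ ℝ^{n×n}, any solution P of the discrete Lyapunov equation P − AᵀPA = X satisfies ‖P‖_F ≤ (κ / (γ(2−γ))) · ‖X‖_F. -/

import Mathlib

open Matrix

/-- The Frobenius norm of a real matrix. -/
noncomputable def frobNorm {m n : ℕ} (M : Matrix (Fin m) (Fin n) ℝ) : ℝ :=
  Real.sqrt (∑ i, ∑ j, (M i j) ^ 2)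

namespace LyapAux

variable {n : ℕ}

/-- Squared Euclidean norm of a vector. -/
noncomputable def ns (v : Fin n → ℝ) : ℝ := ∑ i, (v i) ^ 2

lemma ns_nonneg (v : Fin n → ℝ) : 0 ≤ ns v :=
  Finset.sum_nonneg fun _ _ => sq_nonneg _

lemma ns_eq_dot (v : Fin n → ℝ) : ns v = v ⬝ᵥ v := by
  simp [ns, dotProduct, sq]

lemma dot_conj (M B : Matrix (Fin n) (Fin n) ℝ) (v : Fin n → ℝ) :
    v ⬝ᵥ ((Bᵀ * M * B) *ᵥ v) = (B *ᵥ v) ⬝ᵥ (M *ᵥ (B *ᵥ v)) := by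
  rw [← mulVec_mulVec, ← mulVec_mulVec, dotProduct_mulVec, vecMul_transpose]

/-- Cauchy–Schwarz for dot products. -/
lemma dot_sq_le (x y : Fin n → ℝ) : (x ⬝ᵥ y) ^ 2 ≤ ns x * ns y := by
  simpa [dotProduct, ns] using Finset.sum_mul_sq_le_sq_mul_sq Finset.univ x y

/-- Transfer an operator bound to the transpose, via Cauchy–Schwarz. -/
lemma ns_transpose (B : Matrix (Fin n) (Fin n) ℝ) (c : ℝ) (hc : 0 ≤ c)
    (h : ∀ v, ns (B *ᵥ v) ≤ c * ns v) (v : Fin n → ℝ) :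
    ns (Bᵀ *ᵥ v) ≤ c * ns v := by
  have key : ns (Bᵀ *ᵥ v) = (B *ᵥ (Bᵀ *ᵥ v)) ⬝ᵥ v := by
    rw [ns_eq_dot, dotProduct_mulVec, vecMul_transpose]
  have h1 : (ns (Bᵀ *ᵥ v)) ^ 2 ≤ (c * ns (Bᵀ *ᵥ v)) * ns v := by
    calc (ns (Bᵀ *ᵥ v)) ^ 2 = ((B *ᵥ (Bᵀ *ᵥ v)) ⬝ᵥ v) ^ 2 := by rw [key]
      _ ≤ ns (B *ᵥ (Bᵀ *ᵥ v)) * ns v := dot_sq_le _ _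
      _ ≤ (c * ns (Bᵀ *ᵥ v)) * ns v :=
          mul_le_mul_of_nonneg_right (h _) (ns_nonneg v)
  rcases eq_or_lt_of_le (ns_nonneg (Bᵀ *ᵥ v)) with h0 | h0
  · rw [← h0]; exact mul_nonneg hc (ns_nonneg v)
  · nlinarith

/-- Squared Frobenius norm. -/
noncomputable def fsq (M : Matrix (Fin n) (Fin n) ℝ) : ℝ := ∑ i, ∑ j, (M i j) ^ 2

lemma fsq_nonneg (M : Matrix (Fin n) (Fin n) ℝ) : 0 ≤ fsq M :=
  Finset.sum_nonneg fun _ _ => Finset.sum_nonneg fun _ _ => sq_nonneg _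

lemma frobNorm_eq (M : Matrix (Fin n) (Fin n) ℝ) : frobNorm M = Real.sqrt (fsq M) := rfl

lemma fsq_mul_left (B M : Matrix (Fin n) (Fin n) ℝ) (c : ℝ)
    (h : ∀ v, ns (B *ᵥ v) ≤ c * ns v) : fsq (B * M) ≤ c * fsq M := by
  have key : fsq (B * M) = ∑ j, ns (B *ᵥ (fun k => M k j)) := by
    rw [fsq, Finset.sum_comm]
    refine Finset.sum_congr rfl fun j _ => ?_
    refine Finset.sum_congr rfl fun i _ => ?_
    simp [Matrix.mul_apply, Matrix.mulVec, dotProduct]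
  rw [key, fsq, Finset.sum_comm]
  rw [Finset.mul_sum]
  exact Finset.sum_le_sum fun j _ => h _

lemma fsq_mul_right (M B : Matrix (Fin n) (Fin n) ℝ) (c : ℝ)
    (h : ∀ v, ns (Bᵀ *ᵥ v) ≤ c * ns v) : fsq (M * B) ≤ c * fsq M := by
  have key : fsq (M * B) = ∑ i, ns (Bᵀ *ᵥ (M i)) := by
    refine Finset.sum_congr rfl fun i _ => ?_
    refine Finset.sum_congr rfl fun j _ => ?_
    simp [Matrix.mul_apply, Matrix.mulVec, dotProduct, Matrix.transpose_apply, mul_comm]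
  rw [key, fsq, Finset.mul_sum]
  exact Finset.sum_le_sum fun i _ => h _

/-- Euclidean-space representation of a matrix, for triangle inequalities. -/
noncomputable def toE (M : Matrix (Fin n) (Fin n) ℝ) : EuclideanSpace ℝ (Fin n × Fin n) :=
  (WithLp.equiv 2 (Fin n × Fin n → ℝ)).symm (fun p => M p.1 p.2)

lemma frobNorm_eq_norm (M : Matrix (Fin n) (Fin n) ℝ) : frobNorm M = ‖toE M‖ := by
  rw [frobNorm, EuclideanSpace.norm_eq]
  congr 1
  rw [Fintype.sum_prod_type]
  refine Finset.sum_congr rfl fun i _ => Finset.sum_congr rfl fun j _ => ?_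
  simp [toE, Real.norm_eq_abs, sq_abs]

lemma toE_add (M N : Matrix (Fin n) (Fin n) ℝ) : toE (M + N) = toE M + toE N := rfl

lemma frobNorm_nonneg (M : Matrix (Fin n) (Fin n) ℝ) : 0 ≤ frobNorm M :=
  Real.sqrt_nonneg _

lemma frobNorm_add_le (M N : Matrix (Fin n) (Fin n) ℝ) :
    frobNorm (M + N) ≤ frobNorm M + frobNorm N := by
  rw [frobNorm_eq_norm, frobNorm_eq_norm, frobNorm_eq_norm, toE_add]
  exact norm_add_le _ _

lemma frobNorm_sum_le {ι : Type*} (s : Finset ι) (f : ι → Matrix (Fin n) (Fin n) ℝ) :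
    frobNorm (∑ t ∈ s, f t) ≤ ∑ t ∈ s, frobNorm (f t) := by
  classical
  induction s using Finset.cons_induction with
  | empty => simp [frobNorm]
  | cons a s ha ih =>
    rw [Finset.sum_cons, Finset.sum_cons]
    exact (frobNorm_add_le _ _).trans (by linarith)

lemma frob_le_of_fsq (M N : Matrix (Fin n) (Fin n) ℝ) (c : ℝ) (hc : 0 ≤ c)
    (h : fsq M ≤ c ^ 2 * fsq N) : frobNorm M ≤ c * frobNorm N := by
  rw [frobNorm_eq, frobNorm_eq]
  calc Real.sqrt (fsq M) ≤ Real.sqrt (c ^ 2 * fsq N) := Real.sqrt_le_sqrt h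
    _ = c * Real.sqrt (fsq N) := by
        rw [Real.sqrt_mul (sq_nonneg c), Real.sqrt_sq hc]

end LyapAux

open LyapAux

/-- **Bound on the inverse Lyapunov operator (Theorem 1).** Let `κ ≥ 1`, `γ ∈ (0,1)`,
let `S` be symmetric with `Iₙ ≼ S ≼ κIₙ`, and let `A` satisfy `AᵀSA ≼ (1−γ)²S` in the
Loewner order.  Then any solution `P` of the discrete Lyapunov equation `P − AᵀPA = X`
satisfies `‖P‖_F ≤ (κ / (γ(2−γ))) ‖X‖_F`. -/
theorem lyapunov_inverse_frobenius_bound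
    {n : ℕ} (κ γ : ℝ) (hκ : 1 ≤ κ) (hγ0 : 0 < γ) (hγ1 : γ < 1)
    (S A : Matrix (Fin n) (Fin n) ℝ) (hSsymm : S.IsSymm)
    (hlow : (S - 1).PosSemidef)
    (hhigh : (κ • (1 : Matrix (Fin n) (Fin n) ℝ) - S).PosSemidef)
    (hcontract : ((1 - γ) ^ 2 • S - Aᵀ * S * A).PosSemidef) :
    ∀ (X P : Matrix (Fin n) (Fin n) ℝ), P - Aᵀ * P * A = X →
      frobNorm P ≤ κ / (γ * (2 - γ)) * frobNorm X := by
  intro X P hP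
  set r : ℝ := (1 - γ) ^ 2 with hr
  have hγ' : 0 < 1 - γ := by linarith
  have hr0 : 0 ≤ r := sq_nonneg _
  have hr1 : r < 1 := by nlinarith
  have hden : 0 < γ * (2 - γ) := by nlinarith
  have hdenr : γ * (2 - γ) = 1 - r := by rw [hr]; ring
  have hκ0 : 0 < κ := lt_of_lt_of_le one_pos hκ
  -- quadratic form of S
  set q : (Fin n → ℝ) → ℝ := fun v => v ⬝ᵥ (S *ᵥ v) with hq
  have hlow' : ∀ v, ns v ≤ q v := by
    intro v
    have := hlow.dotProduct_mulVec_nonneg v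
    simp only [Matrix.sub_mulVec, dotProduct_sub, Matrix.one_mulVec, star_trivial] at this
    rw [ns_eq_dot]; linarith
  have hhigh' : ∀ v, q v ≤ κ * ns v := by
    intro v
    have := hhigh.dotProduct_mulVec_nonneg v
    simp only [Matrix.sub_mulVec, dotProduct_sub, Matrix.smul_mulVec,
      Matrix.one_mulVec, dotProduct_smul, star_trivial, smul_eq_mul] at this
    rw [ns_eq_dot]; linarith
  have hcon' : ∀ v, q (A *ᵥ v) ≤ r * q v := by
    intro v
    have := hcontract.dotProduct_mulVec_nonneg v
    simp only [Matrix.sub_mulVec, dotProduct_sub, Matrix.smul_mulVec,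
      dotProduct_smul, star_trivial, smul_eq_mul] at this
    have hdc := dot_conj S A v
    rw [hdc] at this
    linarith
  -- q-contraction of powers
  have hq_nonneg : ∀ v, 0 ≤ q v := fun v => le_trans (ns_nonneg v) (hlow' v)
  have hpow : ∀ (t : ℕ) (v : Fin n → ℝ), q ((A ^ t) *ᵥ v) ≤ r ^ t * q v := by
    intro t
    induction t with
    | zero => intro v; simp
    | succ t ih =>
      intro v
      have h1 : (A ^ (t + 1)) *ᵥ v = (A ^ t) *ᵥ (A *ᵥ v) := by
        rw [pow_succ, ← mulVec_mulVec]
      rw [h1]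
      calc q ((A ^ t) *ᵥ (A *ᵥ v)) ≤ r ^ t * q (A *ᵥ v) := ih _
        _ ≤ r ^ t * (r * q v) := by
            have := hcon' v
            exact mul_le_mul_of_nonneg_left this (pow_nonneg hr0 t)
        _ = r ^ (t + 1) * q v := by ring
  -- Euclidean operator bound for A^t
  have hns : ∀ (t : ℕ) (v : Fin n → ℝ), ns ((A ^ t) *ᵥ v) ≤ (κ * r ^ t) * ns v := by
    intro t v
    calc ns ((A ^ t) *ᵥ v) ≤ q ((A ^ t) *ᵥ v) := hlow' _
      _ ≤ r ^ t * q v := hpow t v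
      _ ≤ r ^ t * (κ * ns v) := mul_le_mul_of_nonneg_left (hhigh' v) (pow_nonneg hr0 t)
      _ = (κ * r ^ t) * ns v := by ring
  have hct : ∀ t : ℕ, (0 : ℝ) ≤ κ * r ^ t :=
    fun t => mul_nonneg hκ0.le (pow_nonneg hr0 t)
  have hnsT : ∀ (t : ℕ) (v : Fin n → ℝ), ns ((A ^ t)ᵀ *ᵥ v) ≤ (κ * r ^ t) * ns v :=
    fun t => ns_transpose (A ^ t) (κ * r ^ t) (hct t) (hns t)
  -- Frobenius bound for conjugation by A^t
  have hterm : ∀ (t : ℕ) (M : Matrix (Fin n) (Fin n) ℝ),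
      frobNorm ((A ^ t)ᵀ * M * (A ^ t)) ≤ (κ * r ^ t) * frobNorm M := by
    intro t M
    refine frob_le_of_fsq _ _ _ (hct t) ?_
    calc fsq ((A ^ t)ᵀ * M * (A ^ t)) = fsq ((A ^ t)ᵀ * (M * (A ^ t))) := by rw [mul_assoc]
      _ ≤ (κ * r ^ t) * fsq (M * (A ^ t)) := fsq_mul_left _ _ _ (hnsT t)
      _ ≤ (κ * r ^ t) * ((κ * r ^ t) * fsq M) :=
          mul_le_mul_of_nonneg_left (fsq_mul_right _ _ _ (hnsT t)) (hct t)
      _ = (κ * r ^ t) ^ 2 * fsq M := by ring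
  -- recursion: P = X + Aᵀ P A
  have hrec : P = X + Aᵀ * P * A := by rw [← hP]; abel
  -- expansion
  have hexp : ∀ T : ℕ,
      P = (∑ t ∈ Finset.range T, (A ^ t)ᵀ * X * (A ^ t)) + (A ^ T)ᵀ * P * (A ^ T) := by
    intro T
    induction T with
    | zero => simp
    | succ T ih =>
      have hrem : (A ^ T)ᵀ * P * (A ^ T)
          = (A ^ T)ᵀ * X * (A ^ T) + (A ^ (T + 1))ᵀ * P * (A ^ (T + 1)) := by
        conv_lhs => rw [hrec]
        rw [pow_succ' A T, transpose_mul]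
        noncomm_ring
      rw [Finset.sum_range_succ]
      calc P = (∑ t ∈ Finset.range T, (A ^ t)ᵀ * X * (A ^ t)) + (A ^ T)ᵀ * P * (A ^ T) := ih
        _ = (∑ t ∈ Finset.range T, (A ^ t)ᵀ * X * (A ^ t)) +
            ((A ^ T)ᵀ * X * (A ^ T) + (A ^ (T + 1))ᵀ * P * (A ^ (T + 1))) := by rw [hrem]
        _ = _ := by rw [add_assoc]
  -- main estimate for each T
  have hmain : ∀ T : ℕ,
      frobNorm P ≤ κ / (γ * (2 - γ)) * frobNorm X + (κ * r ^ T) * frobNorm P := by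
    intro T
    have hgeom : (∑ t ∈ Finset.range T, r ^ t) ≤ 1 / (1 - r) := by
      have hgm := geom_sum_mul r T
      rw [le_div_iff₀ (by linarith : (0:ℝ) < 1 - r)]
      nlinarith [pow_nonneg hr0 T]
    calc frobNorm P
        ≤ frobNorm (∑ t ∈ Finset.range T, (A ^ t)ᵀ * X * (A ^ t))
          + frobNorm ((A ^ T)ᵀ * P * (A ^ T)) := by
          conv_lhs => rw [hexp T]
          exact frobNorm_add_le _ _
      _ ≤ (∑ t ∈ Finset.range T, frobNorm ((A ^ t)ᵀ * X * (A ^ t)))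
          + (κ * r ^ T) * frobNorm P := by
          have h2 := hterm T P
          have h1 := frobNorm_sum_le (Finset.range T) (fun t => (A ^ t)ᵀ * X * (A ^ t))
          linarith
      _ ≤ (∑ t ∈ Finset.range T, (κ * r ^ t) * frobNorm X) + (κ * r ^ T) * frobNorm P := by
          have := Finset.sum_le_sum (fun t (_ : t ∈ Finset.range T) => hterm t X)
          linarith
      _ ≤ κ / (γ * (2 - γ)) * frobNorm X + (κ * r ^ T) * frobNorm P := by
          have hXnn := frobNorm_nonneg X
          have h3 : (∑ t ∈ Finset.range T, (κ * r ^ t) * frobNorm X)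
              = (∑ t ∈ Finset.range T, r ^ t) * (κ * frobNorm X) := by
            rw [Finset.sum_mul]
            exact Finset.sum_congr rfl fun t _ => by ring
          have h4 : (∑ t ∈ Finset.range T, r ^ t) * (κ * frobNorm X)
              ≤ (1 / (1 - r)) * (κ * frobNorm X) :=
            mul_le_mul_of_nonneg_right hgeom (mul_nonneg hκ0.le hXnn)
          have h5 : (1 / (1 - r)) * (κ * frobNorm X) = κ / (γ * (2 - γ)) * frobNorm X := by
            rw [hdenr]; field_simp
          linarith
  -- epsilon argument
  refine le_of_forall_pos_le_add ?_
  intro ε hε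
  rcases eq_or_lt_of_le (frobNorm_nonneg P) with h0 | h0
  · have : (0:ℝ) ≤ κ / (γ * (2 - γ)) * frobNorm X :=
      mul_nonneg (div_nonneg hκ0.le hden.le) (frobNorm_nonneg X)
    rw [← h0]; linarith
  · obtain ⟨T, hT⟩ := exists_pow_lt_of_lt_one
      (show (0:ℝ) < ε / (κ * frobNorm P) from div_pos hε (mul_pos hκ0 h0)) hr1
    have h6 : (κ * r ^ T) * frobNorm P < ε := by
      calc (κ * r ^ T) * frobNorm P = r ^ T * (κ * frobNorm P) := by ring
        _ < ε := (lt_div_iff₀ (mul_pos hκ0 h0)).mp hT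
    linarith [hmain T]
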